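/- Let X be a Banach space and (X_k)_{k≥1} a representing system of subspaces of X. Define X_k' = ∩_{j≠k} X_j^⊥ ⊂ X* (the annihilators). Then there exists ε > 0 such that for all natural numbers n, m and all φ ∈ X_1' + ... + X_n', ψ ∈ X_{n+1}' + ... + X_{n+m}', one has ‖φ + ψ‖ ≥ ε‖φ‖. -/

import Mathlib

open Filter Finset

/-- `S = (X_k)` is a representing system of subspaces. -/
def IsRSS {E : Type*} [NormedAddCommGroup E] [NormedSpace ℝ E]
    (X : ℕ → Submodule ℝ E) : Prop :=
  ∀ x : E, ∃ f : ℕ → E, (∀ k, f k ∈ X k) ∧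
    Tendsto (fun n => ∑ k ∈ Finset.range n, f k) atTop (nhds x)

/-- Annihilator of a subspace `Y ⊆ X` inside the continuous dual `X*`. -/
noncomputable def annih {E : Type*} [NormedAddCommGroup E] [NormedSpace ℝ E]
    (Y : Submodule ℝ E) : Submodule ℝ (E →L[ℝ] ℝ) where
  carrier := {φ | ∀ x ∈ Y, φ x = 0}
  add_mem' := by intro φ ψ hφ hψ x hx; simp [hφ x hx, hψ x hx]
  zero_mem' := by intro x hx; simp
  smul_mem' := by intro a φ hφ x hx; simp [hφ x hx]

/-- The subspace `X_k' = ⋂_{j ≠ k} X_j^⊥` of the dual. -/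
noncomputable def dualSystem {E : Type*} [NormedAddCommGroup E] [NormedSpace ℝ E]
    (X : ℕ → Submodule ℝ E) (k : ℕ) : Submodule ℝ (E →L[ℝ] ℝ) :=
  ⨅ j ∈ {j | j ≠ k}, annih (X j)

section Aux

variable {E : Type*} [NormedAddCommGroup E] [NormedSpace ℝ E]

lemma dualSystem_le_annih (X : ℕ → Submodule ℝ E) {k j : ℕ} (h : j ≠ k) :
    dualSystem X k ≤ annih (X j) :=
  iInf₂_le j h

lemma iSup_dualSystem_apply (X : ℕ → Submodule ℝ E) (s : Finset ℕ)
    {φ : E →L[ℝ] ℝ} (hφ : φ ∈ ⨆ k ∈ s, dualSystem X k)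
    {j : ℕ} (hj : j ∉ s) {x : E} (hx : x ∈ X j) : φ x = 0 := by
  have h : (⨆ k ∈ s, dualSystem X k) ≤ annih (X j) := by
    refine iSup₂_le fun k hk => dualSystem_le_annih X ?_
    rintro rfl; exact hj hk
  exact h hφ x hx

/-- The space of bounded "partial sum sequences" adapted to the system `X`. -/
def rssSpace (X : ℕ → Submodule ℝ E) : Submodule ℝ (BoundedContinuousFunction ℕ E) where
  carrier := {S | S 0 = 0 ∧ (∀ n, S (n + 1) - S n ∈ X n) ∧ CauchySeq (⇑S)}
  add_mem' := by
    rintro S T ⟨hS0, hSX, hSc⟩ ⟨hT0, hTX, hTc⟩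
    refine ⟨by simp [hS0, hT0], fun n => ?_, ?_⟩
    · have h := (X n).add_mem (hSX n) (hTX n)
      have : (S + T) (n + 1) - (S + T) n = (S (n + 1) - S n) + (T (n + 1) - T n) := by
        simp; abel
      rw [this]; exact h
    · have := hSc.add hTc
      simpa using this
  zero_mem' := by
    refine ⟨by simp, fun n => by simp, ?_⟩
    simpa [Pi.zero_def] using cauchySeq_const (0 : E)
  smul_mem' := by
    rintro c S ⟨hS0, hSX, hSc⟩
    refine ⟨by simp [hS0], fun n => ?_, ?_⟩
    · have h := (X n).smul_mem c (hSX n)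
      have : (c • S) (n + 1) - (c • S) n = c • (S (n + 1) - S n) := by
        simp [smul_sub]
      rw [this]; exact h
    · have := (uniformContinuous_const_smul (M := ℝ) (X := E) c).comp_cauchySeq hSc
      simpa [Function.comp_def] using this

lemma isClosed_rssSpace (X : ℕ → Submodule ℝ E) (hX : ∀ k, IsClosed (X k : Set E)) :
    IsClosed (rssSpace X : Set (BoundedContinuousFunction ℕ E)) := by
  refine IsSeqClosed.isClosed ?_
  rintro u S hu hlim
  have hpt : ∀ n : ℕ, Tendsto (fun i => u i n) atTop (nhds (S n)) := fun n =>
    (BoundedContinuousFunction.tendsto_iff_tendstoUniformly.mp hlim).tendsto_at n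
  refine ⟨?_, fun n => ?_, ?_⟩
  · have h0 : Tendsto (fun i => u i 0) atTop (nhds (0 : E)) := by
      simpa [(fun i => (hu i).1 : ∀ i, u i 0 = 0)] using tendsto_const_nhds (α := ℕ) (a := (0 : E))
    exact tendsto_nhds_unique (hpt 0) h0
  · exact (hX n).mem_of_tendsto ((hpt (n + 1)).sub (hpt n))
      (Filter.Eventually.of_forall fun i => (hu i).2.1 n)
  · rw [Metric.cauchySeq_iff]
    intro ε hε
    obtain ⟨i₀, hi₀⟩ := (Metric.tendsto_atTop.mp hlim (ε / 3) (by positivity))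
    have hdi : dist (u i₀) S < ε / 3 := hi₀ i₀ le_rfl
    obtain ⟨N, hN⟩ := Metric.cauchySeq_iff.mp (hu i₀).2.2 (ε / 3) (by positivity)
    refine ⟨N, fun a ha b hb => ?_⟩
    have h1 : dist (S a) (u i₀ a) ≤ dist (u i₀) S := by
      rw [dist_comm]; exact BoundedContinuousFunction.dist_coe_le_dist a
    have h2 : dist (u i₀ b) (S b) ≤ dist (u i₀) S :=
      BoundedContinuousFunction.dist_coe_le_dist b
    have h3 := hN a ha b hb
    calc dist (S a) (S b) ≤ dist (S a) (u i₀ a) + dist (u i₀ a) (u i₀ b) + dist (u i₀ b) (S b) :=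
          dist_triangle4 _ _ _ _
      _ < ε / 3 + ε / 3 + ε / 3 :=
          add_lt_add (add_lt_add (h1.trans_lt hdi) h3) (h2.trans_lt hdi)
      _ = ε := by ring

variable [CompleteSpace E]

lemma rssSpace_tendsto (X : ℕ → Submodule ℝ E) (S : rssSpace X) :
    Tendsto (⇑(S : BoundedContinuousFunction ℕ E)) atTop
      (nhds (limUnder atTop (⇑(S : BoundedContinuousFunction ℕ E)))) :=
  S.2.2.2.tendsto_limUnder

/-- The "sum" map assigning to a partial sum sequence its limit. -/
noncomputable def rssLimit (X : ℕ → Submodule ℝ E) : rssSpace X →L[ℝ] E :=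
  LinearMap.mkContinuous
    { toFun := fun S => limUnder atTop (⇑(S : BoundedContinuousFunction ℕ E))
      map_add' := by
        intro S T
        refine tendsto_nhds_unique (rssSpace_tendsto X (S + T)) ?_
        have := (rssSpace_tendsto X S).add (rssSpace_tendsto X T)
        simpa [Pi.add_def] using this
      map_smul' := by
        intro c S
        refine tendsto_nhds_unique (rssSpace_tendsto X (c • S)) ?_
        have := (rssSpace_tendsto X S).const_smul c
        simpa using this }
    1 (by
      intro S
      refine le_of_tendsto' (rssSpace_tendsto X S).norm fun n => ?_
      rw [one_mul]
      exact (S : BoundedContinuousFunction ℕ E).norm_coe_le_norm n)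

lemma rssLimit_apply (X : ℕ → Submodule ℝ E) (S : rssSpace X) :
    rssLimit X S = limUnder atTop (⇑(S : BoundedContinuousFunction ℕ E)) := rfl

lemma rssLimit_surjective (X : ℕ → Submodule ℝ E) (hS : IsRSS X) :
    Function.Surjective (rssLimit X) := by
  intro x
  obtain ⟨f, hf, hconv⟩ := hS x
  set s : ℕ → E := fun n => ∑ k ∈ Finset.range n, f k with hs
  obtain ⟨C, hC⟩ : ∃ C, ∀ n, ‖s n‖ ≤ C := by
    obtain ⟨C, hC⟩ := hconv.norm.bddAbove_range
    exact ⟨C, fun n => hC ⟨n, rfl⟩⟩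
  set Sb : BoundedContinuousFunction ℕ E :=
    BoundedContinuousFunction.ofNormedAddCommGroup s continuous_of_discreteTopology C hC with hSb
  have hmem : Sb ∈ rssSpace X := by
    refine ⟨by simp [hSb, hs], fun n => ?_, ?_⟩
    · have : Sb (n + 1) - Sb n = f n := by
        simp [hSb, hs, Finset.sum_range_succ]
      rw [this]; exact hf n
    · exact hconv.cauchySeq
  refine ⟨⟨Sb, hmem⟩, ?_⟩
  exact tendsto_nhds_unique (rssSpace_tendsto X ⟨Sb, hmem⟩) hconv

end Aux

/-- If `(X_k)` is a representing system of subspaces of a Banach space `X`, then there is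
`ε > 0` such that for all `n, m` and all `φ ∈ X_1' + ⋯ + X_n'`,
`ψ ∈ X_{n+1}' + ⋯ + X_{n+m}'` one has `‖φ + ψ‖ ≥ ε ‖φ‖`. -/
theorem rss_dual_schauder_inequality {E : Type*} [NormedAddCommGroup E]
    [NormedSpace ℝ E] [CompleteSpace E] (X : ℕ → Submodule ℝ E)
    (hX : ∀ k, IsClosed (X k : Set E)) (hS : IsRSS X) :
    ∃ ε : ℝ, 0 < ε ∧ ∀ n m : ℕ, ∀ φ ∈ ⨆ k ∈ Finset.range n, dualSystem X k,
      ∀ ψ ∈ ⨆ k ∈ Finset.Ico n (n + m), dualSystem X k,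
        ε * ‖φ‖ ≤ ‖φ + ψ‖ := by
  haveI : CompleteSpace (rssSpace X) := (isClosed_rssSpace X hX).completeSpace_coe
  obtain ⟨C, hC, hpre⟩ :=
    ContinuousLinearMap.exists_preimage_norm_le (rssLimit X) (rssLimit_surjective X hS)
  refine ⟨C⁻¹, by positivity, fun n m φ hφ ψ hψ => ?_⟩
  rw [inv_mul_le_iff₀ hC]
  have key : ∀ x : E, ‖φ x‖ ≤ C * ‖φ + ψ‖ * ‖x‖ := by
    intro x
    obtain ⟨S, hSx, hSnorm⟩ := hpre x
    set Sf : BoundedContinuousFunction ℕ E := (S : BoundedContinuousFunction ℕ E) with hSf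
    obtain ⟨hS0, hSX, hSc⟩ := S.2
    set f : ℕ → E := fun k => Sf (k + 1) - Sf k with hfd
    have hSsum : ∀ N : ℕ, Sf N = ∑ k ∈ Finset.range N, f k := by
      intro N
      rw [hfd, Finset.sum_range_sub (fun k => Sf k)]
      simp [hSf, hS0]
    -- φ (Sf N) is eventually constant equal to φ (Sf n)
    have hφsum : ∀ N : ℕ, n ≤ N → φ (Sf N) = φ (Sf n) := by
      intro N hN
      rw [hSsum N, hSsum n, map_sum, map_sum]
      refine (Finset.sum_subset (Finset.range_subset_range.mpr hN) ?_).symm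
      intro k hk hk'
      exact iSup_dualSystem_apply X (Finset.range n) hφ hk' (hSX k)
    have hxlim : Tendsto (fun N => φ (Sf N)) atTop (nhds (φ x)) := by
      have h := rssSpace_tendsto X S
      rw [← rssLimit_apply, hSx] at h
      exact (φ.continuous.tendsto x).comp h
    have hφx : φ x = φ (Sf n) := by
      refine tendsto_nhds_unique hxlim ?_
      refine Tendsto.congr' ?_ (tendsto_const_nhds : Tendsto _ atTop (nhds (φ (Sf n))))
      filter_upwards [eventually_ge_atTop n] with N hN
      exact (hφsum N hN).symm
    have hψ0 : ψ (Sf n) = 0 := by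
      rw [hSsum n, map_sum]
      refine Finset.sum_eq_zero fun k hk => ?_
      have hk' : k ∉ Finset.Ico n (n + m) := by
        simp only [Finset.mem_range] at hk
        simp [Finset.mem_Ico]; omega
      exact iSup_dualSystem_apply X (Finset.Ico n (n + m)) hψ hk' (hSX k)
    have h1 : φ x = (φ + ψ) (Sf n) := by
      rw [ContinuousLinearMap.add_apply, hψ0, add_zero, hφx]
    rw [h1]
    calc ‖(φ + ψ) (Sf n)‖ ≤ ‖φ + ψ‖ * ‖Sf n‖ := (φ + ψ).le_opNorm _
      _ ≤ ‖φ + ψ‖ * (C * ‖x‖) := by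
          refine mul_le_mul_of_nonneg_left ?_ (norm_nonneg _)
          exact (Sf.norm_coe_le_norm n).trans hSnorm
      _ = C * ‖φ + ψ‖ * ‖x‖ := by ring
  exact φ.opNorm_le_bound (by positivity) key
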